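/- Let N ≥ 2 and let S ⊂ ℝ^N be a nonempty compact set equal to the closure of its interior. Define the signed distance 𝐝_S(x) := dist(x, S) − dist(x, closure(ℝ^N ∖ S)), and suppose that for some γ₀ > 0 the function 𝐝_S is of class C² on the open set {x : |𝐝_S(x)| < 2γ₀}. Let m > 0. Then there exists α > 0, depending only on S, γ₀ and m, such that for every γ ∈ (0, γ₀) the following holds: if u is continuous on the compact set {x : 0 ≤ 𝐝_S(x) ≤ γ}, harmonic on the open set {x : 0 < 𝐝_S(x) < γ}, satisfies u ≥ 0 on {0 ≤ 𝐝_S ≤ γ}, u ≥ m on {x : 𝐝_S(x) = 0}, and u = 0 on {x : 𝐝_S(x) = γ}, then at every point x with 𝐝_S(x) = γ at which u is differentiable along {0 ≤ 𝐝_S ≤ γ}, every such derivative p ∈ ℝ^N satisfies ‖p‖² ≥ α/γ². -/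

import Mathlib

open Metric Set Filter

/-- The Laplacian of `f : ℝ^N → ℝ` at `x`, as the sum of the second partial
derivatives along the coordinate directions. -/
noncomputable def lapl {N : ℕ} (f : EuclideanSpace ℝ (Fin N) → ℝ)
    (x : EuclideanSpace ℝ (Fin N)) : ℝ :=
  ∑ i : Fin N,
    fderiv ℝ (fun y => fderiv ℝ f y (EuclideanSpace.single i 1)) x (EuclideanSpace.single i 1)

/-- `f` is harmonic on `Ω`: it is `C²` there and its Laplacian vanishes on `Ω`. -/
def IsHarmonicOn {N : ℕ} (f : EuclideanSpace ℝ (Fin N) → ℝ)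
    (Ω : Set (EuclideanSpace ℝ (Fin N))) : Prop :=
  ContDiffOn ℝ 2 f Ω ∧ ∀ x ∈ Ω, lapl f x = 0

/-- The signed distance to a set `S`: `dist(x, S) - dist(x, closure (Sᶜ))`. -/
noncomputable def sgnDist {N : ℕ} (S : Set (EuclideanSpace ℝ (Fin N)))
    (x : EuclideanSpace ℝ (Fin N)) : ℝ :=
  Metric.infDist x S - Metric.infDist x (closure Sᶜ)

section Auxiliary

/-! ### One-dimensional second derivative test -/

lemma secondDeriv_nonneg_of_isLocalMin {g : ℝ → ℝ} {c : ℝ}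
    (hg : ∀ᶠ t in nhds (0:ℝ), DifferentiableAt ℝ g t)
    (hd : HasDerivAt (deriv g) c 0) (hmin : IsLocalMin g 0) : 0 ≤ c := by
  by_contra hc
  push_neg at hc
  have h0 : deriv g 0 = 0 := hmin.deriv_eq_zero
  have hslope : Tendsto (slope (deriv g) 0) (nhdsWithin 0 {(0:ℝ)}ᶜ) (nhds c) := by
    have := hasDerivAt_iff_tendsto_slope.1 hd
    simpa [Set.compl_eq_univ_diff] using this
  have h1 : ∀ᶠ t in nhdsWithin (0:ℝ) {(0:ℝ)}ᶜ, slope (deriv g) 0 t < 0 :=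
    hslope.eventually_lt_const hc
  have h2 : ∀ᶠ t in nhds (0:ℝ), (t ≠ 0 → slope (deriv g) 0 t < 0) ∧
      g 0 ≤ g t ∧ DifferentiableAt ℝ g t := by
    refine ((eventually_nhdsWithin_iff.1 h1).and (hmin.and hg)).mono ?_
    tauto
  obtain ⟨ε, hε, hball⟩ := Metric.eventually_nhds_iff.1 h2
  set δ := ε / 2 with hδdef
  have hδ : 0 < δ := by positivity
  have hmem : ∀ t ∈ Icc (0:ℝ) δ, (t ≠ 0 → slope (deriv g) 0 t < 0) ∧
      g 0 ≤ g t ∧ DifferentiableAt ℝ g t := by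
    intro t ht
    apply hball
    rw [Real.dist_eq]
    have := ht.1; have := ht.2
    rw [abs_sub_comm, abs_of_nonpos (by linarith)]
    linarith
  have hcont : ContinuousOn g (Icc (0:ℝ) δ) := fun t ht =>
    ((hmem t ht).2.2).continuousAt.continuousWithinAt
  have hderiv : ∀ t ∈ interior (Icc (0:ℝ) δ), deriv g t < 0 := by
    intro t ht
    rw [interior_Icc] at ht
    have htpos : 0 < t := ht.1
    have hs := (hmem t ⟨le_of_lt ht.1, le_of_lt ht.2⟩).1 (ne_of_gt htpos)
    rw [slope_def_field, h0] at hs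
    have hdiv : (deriv g t - 0) / (t - 0) < 0 := by
      simpa [div_eq_inv_mul] using hs
    rw [sub_zero, sub_zero] at hdiv
    rcases div_neg_iff.mp hdiv with ⟨_, h⟩ | ⟨h, _⟩
    · linarith
    · exact h
  have hanti : StrictAntiOn g (Icc (0:ℝ) δ) :=
    strictAntiOn_of_deriv_neg (convex_Icc _ _) hcont hderiv
  have : g δ < g 0 := hanti ⟨le_refl 0, le_of_lt hδ⟩ ⟨le_of_lt hδ, le_refl δ⟩ hδ
  exact absurd (hmem δ ⟨le_of_lt hδ, le_refl δ⟩).2.1 (not_le.mpr this)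

/-! ### Second derivative test along a direction in a normed space -/

lemma second_partial_nonneg_of_isLocalMin {E : Type*} [NormedAddCommGroup E] [NormedSpace ℝ E]
    {f : E → ℝ} {x : E} (hf : ContDiffAt ℝ 2 f x) (hmin : IsLocalMin f x) (e : E) :
    0 ≤ fderiv ℝ (fun y => fderiv ℝ f y e) x e := by
  set line : ℝ → E := fun t => x + t • e with hline
  have hline0 : line 0 = x := by simp [hline]
  have hlineDeriv : ∀ t : ℝ, HasDerivAt line e t := by
    intro t
    simpa [hline] using ((hasDerivAt_id t).smul_const e).const_add x
  have hlineCont : ContinuousAt line 0 := (hlineDeriv 0).continuousAt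
  set g : ℝ → ℝ := f ∘ line with hg
  have hev : ∀ᶠ y in nhds x, DifferentiableAt ℝ f y :=
    (hf.eventually (by norm_num)).mono fun y hy => hy.differentiableAt (by norm_num)
  have hevt : ∀ᶠ t in nhds (0:ℝ), DifferentiableAt ℝ f (line t) := by
    have h := hlineCont.tendsto
    rw [hline0] at h
    exact h.eventually hev
  have hgd : ∀ᶠ t in nhds (0:ℝ), DifferentiableAt ℝ g t :=
    hevt.mono fun t ht => ht.comp t ((hlineDeriv t).differentiableAt)
  have hderivg : deriv g =ᶠ[nhds (0:ℝ)] fun t => fderiv ℝ f (line t) e :=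
    hevt.mono fun t ht => by
      have h : HasDerivAt g (fderiv ℝ f (line t) e) t :=
        ht.hasFDerivAt.comp_hasDerivAt t (hlineDeriv t)
      exact h.deriv
  have hΦ : DifferentiableAt ℝ (fderiv ℝ f) x :=
    (hf.fderiv_right (m := 1) (by norm_num)).differentiableAt (by norm_num)
  have hF : DifferentiableAt ℝ (fun y => fderiv ℝ f y e) x :=
    hΦ.clm_apply (differentiableAt_const e)
  have hcomp : HasDerivAt (fun t => fderiv ℝ f (line t) e)
      (fderiv ℝ (fun y => fderiv ℝ f y e) x e) 0 := by
    have h1 := hF.hasFDerivAt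
    rw [show x = line 0 from hline0.symm] at h1
    have h2 := h1.comp_hasDerivAt 0 (hlineDeriv 0)
    rw [hline0] at h2
    exact h2
  have hdg : HasDerivAt (deriv g) (fderiv ℝ (fun y => fderiv ℝ f y e) x e) 0 :=
    (hderivg.hasDerivAt_iff).2 hcomp
  have hming : IsLocalMin g 0 := by
    have ht := hlineCont.tendsto
    rw [hline0] at ht
    exact IsMinFilter.comp_tendsto (by rw [hline0]; exact hmin) ht
  exact secondDeriv_nonneg_of_isLocalMin hgd hdg hming

/-! ### Geometry of the signed distance -/

variable {N : ℕ} {S : Set (EuclideanSpace ℝ (Fin N))}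

lemma sgnDist_eq_infDist {x : EuclideanSpace ℝ (Fin N)} (hx : x ∉ S) :
    sgnDist S x = Metric.infDist x S := by
  have h : Metric.infDist x (closure Sᶜ) = 0 :=
    Metric.infDist_zero_of_mem (subset_closure hx)
  rw [sgnDist, h, sub_zero]

lemma notMem_of_sgnDist_pos {x : EuclideanSpace ℝ (Fin N)} (hx : 0 < sgnDist S x) : x ∉ S := by
  intro hmem
  have h1 : Metric.infDist x S = 0 := Metric.infDist_zero_of_mem hmem
  have h2 : (0:ℝ) ≤ Metric.infDist x (closure Sᶜ) := Metric.infDist_nonneg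
  simp only [sgnDist, h1] at hx
  linarith

lemma sgnDist_pos_eq {x : EuclideanSpace ℝ (Fin N)} (hx : 0 < sgnDist S x) :
    Metric.infDist x S = sgnDist S x :=
  (sgnDist_eq_infDist (notMem_of_sgnDist_pos hx)).symm

/-- Along the segment from `x` to its nearest point in `S`, the signed distance
decreases linearly. -/
lemma sgnDist_segment (hScp : IsCompact S) (hSne : S.Nonempty)
    {x : EuclideanSpace ℝ (Fin N)} {t : ℝ} (ht : sgnDist S x = t) (htpos : 0 < t) :
    ∃ v : EuclideanSpace ℝ (Fin N), ‖v‖ = 1 ∧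
      ∀ s ∈ Ico (0:ℝ) t, sgnDist S (x + s • v) = t - s := by
  have hinf : Metric.infDist x S = t := by rw [sgnDist_pos_eq (ht ▸ htpos), ht]
  obtain ⟨z, hzS, hz⟩ := hScp.exists_infDist_eq_dist hSne x
  rw [hinf] at hz
  refine ⟨t⁻¹ • (z - x), ?_, ?_⟩
  · rw [norm_smul, norm_inv, Real.norm_eq_abs, abs_of_pos htpos]
    have h : ‖z - x‖ = t := by rw [hz, dist_eq_norm, norm_sub_rev]
    rw [h, inv_mul_cancel₀ (ne_of_gt htpos)]
  · intro s hs
    set q := x + s • t⁻¹ • (z - x) with hq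
    have hdistq : dist q z = t - s := by
      have : q - z = (1 - s * t⁻¹) • (x - z) := by
        rw [hq]; module
      rw [dist_eq_norm, this, norm_smul, Real.norm_eq_abs]
      have h1 : (0:ℝ) ≤ 1 - s * t⁻¹ := by
        rw [sub_nonneg]
        calc s * t⁻¹ ≤ t * t⁻¹ := by
              apply mul_le_mul_of_nonneg_right (le_of_lt hs.2) (by positivity)
          _ = 1 := mul_inv_cancel₀ (ne_of_gt htpos)
      rw [abs_of_nonneg h1]
      have h2 : ‖x - z‖ = t := by rw [hz, dist_eq_norm]
      rw [h2]
      field_simp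
    have hdxq : dist q x = s := by
      have hxq : q - x = s • t⁻¹ • (z - x) := by rw [hq]; module
      rw [dist_eq_norm, hxq, norm_smul, norm_smul, norm_inv, Real.norm_eq_abs,
        Real.norm_eq_abs, abs_of_pos htpos, abs_of_nonneg hs.1,
        show ‖z - x‖ = t by rw [hz, dist_eq_norm, norm_sub_rev]]
      field_simp
    have hle : Metric.infDist q S ≤ t - s := by
      rw [← hdistq]; exact Metric.infDist_le_dist_of_mem hzS
    have hge : t - s ≤ Metric.infDist q S := by
      have hh := Metric.infDist_le_infDist_add_dist (s := S) (x := x) (y := q)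
      rw [hinf] at hh
      have hcomm : dist x q = s := by rw [dist_comm]; exact (dist_comm q x) ▸ hdxq
      rw [hcomm] at hh
      linarith
    have heq : Metric.infDist q S = t - s := le_antisymm hle hge
    have hqnot : q ∉ S := by
      intro hmem
      rw [Metric.infDist_zero_of_mem hmem] at heq
      linarith [hs.2]
    rw [show x + s • t⁻¹ • (z - x) = q from rfl] at *
    rw [sgnDist_eq_infDist hqnot, heq]

/-- Outside `S`, the (Euclidean) gradient of the signed distance has norm at least `1`:
in coordinates, the sum of the squared partial derivatives is at least `1`. -/
lemma sum_sq_partials_ge_one (hScp : IsCompact S) (hSne : S.Nonempty)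
    {y : EuclideanSpace ℝ (Fin N)} (hy : 0 < sgnDist S y)
    (hd : DifferentiableAt ℝ (sgnDist S) y) :
    1 ≤ ∑ i : Fin N, (fderiv ℝ (sgnDist S) y (EuclideanSpace.single i 1))^2 := by
  obtain ⟨v, hv1, hseg⟩ := sgnDist_segment hScp hSne rfl hy
  set t := sgnDist S y with htdef
  set D := fderiv ℝ (sgnDist S) y with hD
  have hDv : D v = -1 := by
    set line : ℝ → EuclideanSpace ℝ (Fin N) := fun s => y + s • v with hline
    have hline0 : line 0 = y := by simp [hline]
    have hlineDeriv : HasDerivAt line v 0 := by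
      simpa [hline] using ((hasDerivAt_id (0:ℝ)).smul_const v).const_add y
    have hg : HasDerivAt (sgnDist S ∘ line) (D v) 0 := by
      have h1 := hd.hasFDerivAt
      rw [← hline0] at h1
      have h2 := h1.comp_hasDerivAt 0 hlineDeriv
      rw [hline0] at h2
      exact h2
    have hslope : Tendsto (slope (sgnDist S ∘ line) 0) (nhdsWithin 0 (Set.Ioi 0)) (nhds (D v)) := by
      have h2 := hasDerivAt_iff_tendsto_slope.1 hg
      refine h2.mono_left (nhdsWithin_mono 0 ?_)
      intro s hs
      simp only [Set.mem_compl_iff, Set.mem_diff, Set.mem_univ, Set.mem_singleton_iff,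
        true_and]
      exact ne_of_gt hs
    have hconst : Tendsto (slope (sgnDist S ∘ line) 0) (nhdsWithin 0 (Set.Ioi 0)) (nhds (-1)) := by
      apply Tendsto.congr' _ tendsto_const_nhds
      filter_upwards [Ioo_mem_nhdsGT_of_mem (Set.left_mem_Ico.2 hy)] with s hs
      have hgs : sgnDist S (line s) = t - s := hseg s ⟨le_of_lt hs.1, hs.2⟩
      have hg0 : sgnDist S (line 0) = t := by rw [hline0]
      rw [slope_def_field]
      show (-1 : ℝ) = ((sgnDist S ∘ line) s - (sgnDist S ∘ line) 0) / (s - 0)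
      rw [Function.comp_apply, Function.comp_apply, hgs, hg0, sub_zero]
      rw [show t - s - t = -s by ring, neg_div, div_self (ne_of_gt hs.1)]
    exact tendsto_nhds_unique hslope hconst
  have hvsum : v = ∑ i : Fin N, v i • EuclideanSpace.single i (1:ℝ) := by
    ext j
    rw [show (∑ i : Fin N, v i • EuclideanSpace.single i (1:ℝ)) j
        = ∑ i : Fin N, (v i • EuclideanSpace.single i (1:ℝ)) j from by
      rw [WithLp.ofLp_sum]; exact Finset.sum_apply j _ _]
    simp [EuclideanSpace.single_apply]
  have hexp : D v = ∑ i : Fin N, v i * D (EuclideanSpace.single i 1) := by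
    conv_lhs => rw [hvsum]
    rw [map_sum]
    congr 1
    ext i
    rw [map_smul, smul_eq_mul]
  have hnv : ∑ i : Fin N, (v i)^2 = 1 := by
    have h1 : ‖v‖ ^ 2 = ∑ i : Fin N, ‖v i‖ ^ 2 := by
      rw [EuclideanSpace.norm_eq, Real.sq_sqrt]
      positivity
    rw [hv1, one_pow] at h1
    rw [show ∑ i : Fin N, (v i)^2 = ∑ i : Fin N, ‖v i‖^2 from by
      congr 1; ext i; rw [Real.norm_eq_abs, sq_abs]]
    exact h1.symm
  have hcs := Finset.sum_mul_sq_le_sq_mul_sq Finset.univ (fun i => v i)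
    (fun i => D (EuclideanSpace.single i 1))
  rw [← hexp, hDv] at hcs
  simp only [neg_one_sq] at hcs
  rw [hnv, one_mul] at hcs
  exact hcs

/-! ### Laplacian computations -/

lemma lapl_barrier {f : EuclideanSpace ℝ (Fin N) → ℝ} {U : Set (EuclideanSpace ℝ (Fin N))}
    (hU : IsOpen U) (hf : ContDiffOn ℝ 2 f U) {x₀ : EuclideanSpace ℝ (Fin N)} (hx₀ : x₀ ∈ U)
    (a b K : ℝ) :
    lapl (fun y => a * Real.exp (-(K * f y)) + b) x₀ =
      a * (-K) * Real.exp (-(K * f x₀)) * lapl f x₀ +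
      a * K^2 * Real.exp (-(K * f x₀)) *
        (∑ i : Fin N, (fderiv ℝ f x₀ (EuclideanSpace.single i 1))^2) := by
  set w : EuclideanSpace ℝ (Fin N) → ℝ := fun y => a * Real.exp (-(K * f y)) + b with hwdef
  have hdiff : ∀ y ∈ U, HasFDerivAt f (fderiv ℝ f y) y := fun y hy =>
    ((hf.contDiffAt (hU.mem_nhds hy)).differentiableAt (by norm_num)).hasFDerivAt
  have hinner : ∀ y ∈ U, HasFDerivAt (fun z => -(K * f z)) ((-K) • fderiv ℝ f y) y := by
    intro y hy
    have h := ((hdiff y hy).const_mul K).neg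
    rw [show (-K) • fderiv ℝ f y = -(K • fderiv ℝ f y) from neg_smul K _]
    exact h
  have hw : ∀ y ∈ U,
      HasFDerivAt w ((a * (-K) * Real.exp (-(K * f y))) • fderiv ℝ f y) y := by
    intro y hy
    have h := (((hinner y hy).exp).const_mul a).add_const b
    have heq : (a * (-K) * Real.exp (-(K * f y))) • fderiv ℝ f y
        = a • Real.exp (-(K * f y)) • (-K) • fderiv ℝ f y := by
      rw [smul_smul, smul_smul]
      congr 1
      ring
    rw [heq]
    exact h
  have hΦ : DifferentiableAt ℝ (fderiv ℝ f) x₀ :=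
    ((hf.contDiffAt (hU.mem_nhds hx₀)).fderiv_right (m := 1) (by norm_num)).differentiableAt (by norm_num)
  have hterm : ∀ i : Fin N,
      fderiv ℝ (fun y => fderiv ℝ w y (EuclideanSpace.single i 1)) x₀ (EuclideanSpace.single i 1)
      = a * (-K) * Real.exp (-(K * f x₀)) *
          (fderiv ℝ (fun y => fderiv ℝ f y (EuclideanSpace.single i 1)) x₀
            (EuclideanSpace.single i 1)) +
        a * K^2 * Real.exp (-(K * f x₀)) * (fderiv ℝ f x₀ (EuclideanSpace.single i 1))^2 := by
    intro i
    set e := EuclideanSpace.single i (1:ℝ) with he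
    have hev : (fun y => fderiv ℝ w y e) =ᶠ[nhds x₀]
        (fun y => (a * (-K) * Real.exp (-(K * f y))) * (fderiv ℝ f y e)) := by
      filter_upwards [hU.mem_nhds hx₀] with y hy
      rw [(hw y hy).fderiv]
      simp
    rw [hev.fderiv_eq]
    have h₁ : HasFDerivAt (fun y => a * (-K) * Real.exp (-(K * f y)))
        ((a * (-K) * Real.exp (-(K * f x₀)) * (-K)) • fderiv ℝ f x₀) x₀ := by
      have h := ((hinner x₀ hx₀).exp).const_mul (a * (-K))
      have heq : (a * (-K) * Real.exp (-(K * f x₀)) * (-K)) • fderiv ℝ f x₀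
          = (a * (-K)) • Real.exp (-(K * f x₀)) • (-K) • fderiv ℝ f x₀ := by
        rw [smul_smul, smul_smul]
      rw [heq]
      exact h
    have h₂ : HasFDerivAt (fun y => fderiv ℝ f y e)
        (fderiv ℝ (fun y => fderiv ℝ f y e) x₀) x₀ :=
      (hΦ.clm_apply (differentiableAt_const e)).hasFDerivAt
    have hmul := h₁.fun_mul h₂
    rw [hmul.fderiv]
    simp only [ContinuousLinearMap.add_apply, ContinuousLinearMap.smul_apply, smul_eq_mul]
    ring
  rw [lapl]
  simp only [hterm]
  rw [Finset.sum_add_distrib, ← Finset.mul_sum, ← Finset.mul_sum]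
  rw [lapl]

lemma lapl_sub {u w : EuclideanSpace ℝ (Fin N) → ℝ} {x : EuclideanSpace ℝ (Fin N)}
    (hu : ContDiffAt ℝ 2 u x) (hw : ContDiffAt ℝ 2 w x) :
    lapl (fun y => u y - w y) x = lapl u x - lapl w x := by
  have hue : ∀ᶠ y in nhds x, DifferentiableAt ℝ u y :=
    (hu.eventually (by norm_num)).mono fun y hy => hy.differentiableAt (by norm_num)
  have hwe : ∀ᶠ y in nhds x, DifferentiableAt ℝ w y :=
    (hw.eventually (by norm_num)).mono fun y hy => hy.differentiableAt (by norm_num)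
  have hterm : ∀ i : Fin N,
      fderiv ℝ (fun y => fderiv ℝ (fun z => u z - w z) y (EuclideanSpace.single i 1)) x
        (EuclideanSpace.single i 1)
      = fderiv ℝ (fun y => fderiv ℝ u y (EuclideanSpace.single i 1)) x
          (EuclideanSpace.single i 1)
        - fderiv ℝ (fun y => fderiv ℝ w y (EuclideanSpace.single i 1)) x
          (EuclideanSpace.single i 1) := by
    intro i
    set e := EuclideanSpace.single i (1:ℝ)
    have hev : (fun y => fderiv ℝ (fun z => u z - w z) y e) =ᶠ[nhds x]
        (fun y => fderiv ℝ u y e - fderiv ℝ w y e) := by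
      filter_upwards [hue, hwe] with y h1 h2
      rw [fderiv_fun_sub h1 h2]
      simp
    rw [hev.fderiv_eq]
    have hA : DifferentiableAt ℝ (fun y => fderiv ℝ u y e) x :=
      ((hu.fderiv_right (m := 1) (by norm_num)).differentiableAt (by norm_num)).clm_apply
        (differentiableAt_const e)
    have hB : DifferentiableAt ℝ (fun y => fderiv ℝ w y e) x :=
      ((hw.fderiv_right (m := 1) (by norm_num)).differentiableAt (by norm_num)).clm_apply
        (differentiableAt_const e)
    rw [fderiv_fun_sub hA hB]
    simp
  rw [lapl, lapl, lapl, ← Finset.sum_sub_distrib]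
  exact Finset.sum_congr rfl fun i _ => hterm i

end Auxiliary

set_option maxHeartbeats 1000000 in
theorem stmt2 (N : ℕ) (hN : 2 ≤ N) (S : Set (EuclideanSpace ℝ (Fin N)))
    (hSne : S.Nonempty) (hScp : IsCompact S) (hSreg : S = closure (interior S))
    (γ₀ : ℝ) (hγ₀ : 0 < γ₀)
    (hC2 : ContDiffOn ℝ 2 (sgnDist S) {x | |sgnDist S x| < 2 * γ₀})
    (m : ℝ) (hm : 0 < m) :
    ∃ α > 0, ∀ γ, 0 < γ → γ < γ₀ →
      ∀ u : EuclideanSpace ℝ (Fin N) → ℝ,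
        ContinuousOn u {x | 0 ≤ sgnDist S x ∧ sgnDist S x ≤ γ} →
        IsHarmonicOn u {x | 0 < sgnDist S x ∧ sgnDist S x < γ} →
        (∀ x, 0 ≤ sgnDist S x → sgnDist S x ≤ γ → 0 ≤ u x) →
        (∀ x, sgnDist S x = 0 → m ≤ u x) →
        (∀ x, sgnDist S x = γ → u x = 0) →
        ∀ x, sgnDist S x = γ →
          ∀ p : EuclideanSpace ℝ (Fin N),
            HasGradientWithinAt u p {x | 0 ≤ sgnDist S x ∧ sgnDist S x ≤ γ} x →
            α / γ ^ 2 ≤ ‖p‖ ^ 2 := by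
  classical
  have hdcont : Continuous (sgnDist S) :=
    (continuous_infDist_pt S).sub (continuous_infDist_pt (closure Sᶜ))
  set U : Set (EuclideanSpace ℝ (Fin N)) := {x | |sgnDist S x| < 2 * γ₀} with hUdef
  have hUopen : IsOpen U := isOpen_lt (continuous_abs.comp hdcont) continuous_const
  set A₀ : Set (EuclideanSpace ℝ (Fin N)) := {y | 0 ≤ sgnDist S y ∧ sgnDist S y ≤ γ₀}
    with hA₀def
  have hA₀closed : IsClosed A₀ := by
    have : A₀ = {y | 0 ≤ sgnDist S y} ∩ {y | sgnDist S y ≤ γ₀} := rfl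
    rw [this]
    exact (isClosed_le continuous_const hdcont).inter (isClosed_le hdcont continuous_const)
  have hinfle : ∀ y ∈ A₀, Metric.infDist y S ≤ γ₀ := by
    intro y hy
    by_cases hyS : y ∈ S
    · rw [Metric.infDist_zero_of_mem hyS]; exact le_of_lt hγ₀
    · rw [← sgnDist_eq_infDist hyS]; exact hy.2
  have hA₀cp : IsCompact A₀ := by
    obtain ⟨R, hR⟩ := hScp.isBounded.subset_closedBall hSne.some
    apply Metric.isCompact_of_isClosed_isBounded hA₀closed
    apply Bornology.IsBounded.subset (Metric.isBounded_closedBall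
      (x := hSne.some) (r := R + γ₀))
    intro y hy
    obtain ⟨z, hzS, hz⟩ := hScp.exists_infDist_eq_dist hSne y
    have h1 : dist y z ≤ γ₀ := hz ▸ hinfle y hy
    have h2 : dist z hSne.some ≤ R := by
      have := hR hzS
      rwa [Metric.mem_closedBall] at this
    rw [Metric.mem_closedBall]
    calc dist y hSne.some ≤ dist y z + dist z hSne.some := dist_triangle _ _ _
      _ ≤ γ₀ + R := add_le_add h1 h2
      _ = R + γ₀ := by ring
  have hA₀U : A₀ ⊆ U := by
    intro y hy
    show |sgnDist S y| < 2 * γ₀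
    rw [abs_of_nonneg hy.1]
    linarith [hy.2]
  -- bound the Laplacian of the signed distance on A₀
  have hlaplcont : ContinuousOn (lapl (sgnDist S)) U := by
    apply continuousOn_finset_sum
    intro i _
    have h1 : ContDiffOn ℝ 1 (fderiv ℝ (sgnDist S)) U :=
      hC2.fderiv_of_isOpen hUopen (by norm_num)
    have h2 : ContDiffOn ℝ 1 (fun y => fderiv ℝ (sgnDist S) y (EuclideanSpace.single i 1)) U :=
      h1.clm_apply contDiffOn_const
    have h3 : ContinuousOn
        (fderiv ℝ (fun y => fderiv ℝ (sgnDist S) y (EuclideanSpace.single i 1))) U :=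
      h2.continuousOn_fderiv_of_isOpen hUopen le_rfl
    exact h3.clm_apply continuousOn_const
  obtain ⟨K₀, hK₀⟩ := hA₀cp.exists_bound_of_continuousOn (hlaplcont.mono hA₀U)
  set K : ℝ := max K₀ 0 + 1 with hKdef
  have hK1 : (1:ℝ) ≤ K := by
    have := le_max_right K₀ (0:ℝ)
    simp only [hKdef]
    linarith
  have hKpos : (0:ℝ) < K := lt_of_lt_of_le one_pos hK1
  have hKb : ∀ y ∈ A₀, lapl (sgnDist S) y ≤ K - 1 := by
    intro y hy
    have h1 := hK₀ y hy
    rw [Real.norm_eq_abs] at h1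
    have h2 := le_max_left K₀ (0:ℝ)
    calc lapl (sgnDist S) y ≤ |lapl (sgnDist S) y| := le_abs_self _
      _ ≤ K₀ := h1
      _ ≤ max K₀ 0 := h2
      _ = K - 1 := by rw [hKdef]; ring
  refine ⟨(m * Real.exp (-(K * γ₀)))^2, by positivity, ?_⟩
  intro γ hγ hγγ₀ u hucont huharm hunn hubm hubz x hx p hp
  set c : ℝ := m * Real.exp (-(K * γ₀)) with hcdef
  have hcpos : 0 < c := by positivity
  set A : Set (EuclideanSpace ℝ (Fin N)) := {y | 0 ≤ sgnDist S y ∧ sgnDist S y ≤ γ} with hAdef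
  set Ω : Set (EuclideanSpace ℝ (Fin N)) := {y | 0 < sgnDist S y ∧ sgnDist S y < γ} with hΩdef
  have hΩopen : IsOpen Ω := by
    have : Ω = {y | 0 < sgnDist S y} ∩ {y | sgnDist S y < γ} := rfl
    rw [this]
    exact (isOpen_lt continuous_const hdcont).inter (isOpen_lt hdcont continuous_const)
  have hΩA : Ω ⊆ A := fun y hy => ⟨le_of_lt hy.1, le_of_lt hy.2⟩
  have hAA₀ : A ⊆ A₀ := fun y hy => ⟨hy.1, le_trans hy.2 (le_of_lt hγγ₀)⟩
  have hAclosed : IsClosed A := by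
    have : A = {y | 0 ≤ sgnDist S y} ∩ {y | sgnDist S y ≤ γ} := rfl
    rw [this]
    exact (isClosed_le continuous_const hdcont).inter (isClosed_le hdcont continuous_const)
  have hAcp : IsCompact A := hA₀cp.of_isClosed_subset hAclosed hAA₀
  have hΩU : Ω ⊆ U := fun y hy => hA₀U (hAA₀ (hΩA hy))
  -- the barrier function
  set ekγ : ℝ := Real.exp (-(K * γ)) with hekγdef
  have hekγpos : 0 < ekγ := Real.exp_pos _
  have hekγlt : ekγ < 1 := by
    rw [hekγdef, Real.exp_lt_one_iff]
    have : 0 < K * γ := mul_pos hKpos hγ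
    linarith
  have hden : 0 < 1 - ekγ := by linarith
  set a : ℝ := m / (1 - ekγ) with hadef
  have ha : 0 < a := div_pos hm hden
  set b : ℝ := -(a * ekγ) with hbdef
  set w : EuclideanSpace ℝ (Fin N) → ℝ := fun y => a * Real.exp (-(K * sgnDist S y)) + b
    with hwdef
  have hwcont : Continuous w := by
    apply Continuous.add _ continuous_const
    exact continuous_const.mul (Real.continuous_exp.comp ((continuous_const.mul hdcont).neg))
  -- comparison principle: w ≤ u on A
  have hcomp : ∀ y ∈ A, w y ≤ u y := by
    by_contra hcon
    push_neg at hcon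
    obtain ⟨y₀, hy₀A, hy₀lt⟩ := hcon
    set v : EuclideanSpace ℝ (Fin N) → ℝ := fun y => u y - w y with hvdef
    have hvcont : ContinuousOn v A := hucont.sub hwcont.continuousOn
    have hAne : A.Nonempty := ⟨y₀, hy₀A⟩
    obtain ⟨x₀, hx₀A, hx₀min⟩ := hAcp.exists_isMinOn hAne hvcont
    have hneg : v x₀ < 0 := by
      have h1 : v x₀ ≤ v y₀ := hx₀min hy₀A
      have h2 : v y₀ < 0 := sub_neg.2 hy₀lt
      linarith
    have hne0 : sgnDist S x₀ ≠ 0 := by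
      intro h0
      have hw0 : w x₀ = m := by
        rw [hwdef]
        simp only [h0, mul_zero, neg_zero, Real.exp_zero, mul_one]
        have ham : a * (1 - ekγ) = m := by
          rw [hadef]; field_simp
        rw [hbdef]
        linear_combination ham
      have hu0 : m ≤ u x₀ := hubm x₀ h0
      rw [hvdef] at hneg
      simp only [hw0] at hneg
      linarith
    have hneγ : sgnDist S x₀ ≠ γ := by
      intro h0
      have hw0 : w x₀ = 0 := by
        rw [hwdef]
        simp only [h0, hbdef]
        ring
      have hu0 : u x₀ = 0 := hubz x₀ h0
      rw [hvdef] at hneg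
      simp only [hw0, hu0] at hneg
      linarith
    have hx₀Ω : x₀ ∈ Ω :=
      ⟨lt_of_le_of_ne hx₀A.1 (Ne.symm hne0), lt_of_le_of_ne hx₀A.2 hneγ⟩
    have hlocmin : IsLocalMin v x₀ :=
      hx₀min.isLocalMin (Filter.mem_of_superset (hΩopen.mem_nhds hx₀Ω) hΩA)
    have hud : ContDiffAt ℝ 2 u x₀ := huharm.1.contDiffAt (hΩopen.mem_nhds hx₀Ω)
    have hdC2at : ContDiffAt ℝ 2 (sgnDist S) x₀ := hC2.contDiffAt (hUopen.mem_nhds (hΩU hx₀Ω))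
    have hwC2 : ContDiffAt ℝ 2 w x₀ := by
      have h1 : ContDiffAt ℝ 2 (fun y => -(K * sgnDist S y)) x₀ :=
        (contDiffAt_const.mul hdC2at).neg
      have h2 : ContDiffAt ℝ 2 (fun y => Real.exp (-(K * sgnDist S y))) x₀ :=
        Real.contDiff_exp.contDiffAt.comp x₀ h1
      exact (contDiffAt_const.mul h2).add contDiffAt_const
    have hvC2 : ContDiffAt ℝ 2 v x₀ := hud.sub hwC2
    have hlapl_nonneg : 0 ≤ lapl v x₀ := by
      rw [lapl]
      exact Finset.sum_nonneg fun i _ =>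
        second_partial_nonneg_of_isLocalMin hvC2 hlocmin _
    have hlaplv : lapl v x₀ = lapl u x₀ - lapl w x₀ := lapl_sub hud hwC2
    have hlaplu : lapl u x₀ = 0 := huharm.2 x₀ hx₀Ω
    have hlaplw := lapl_barrier hUopen hC2 (hΩU hx₀Ω) a b K
    have hG : 1 ≤ ∑ i : Fin N, (fderiv ℝ (sgnDist S) x₀ (EuclideanSpace.single i 1))^2 :=
      sum_sq_partials_ge_one hScp hSne hx₀Ω.1 (hdC2at.differentiableAt (by norm_num))
    have hLb : lapl (sgnDist S) x₀ ≤ K - 1 := hKb x₀ (hAA₀ (hΩA hx₀Ω))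
    have hwpos : 0 < lapl w x₀ := by
      rw [show lapl w x₀ = lapl (fun y => a * Real.exp (-(K * sgnDist S y)) + b) x₀ from rfl,
        hlaplw]
      set e := Real.exp (-(K * sgnDist S x₀)) with hedef
      have hepos : 0 < e := Real.exp_pos _
      set G := ∑ i : Fin N, (fderiv ℝ (sgnDist S) x₀ (EuclideanSpace.single i 1))^2 with hGdef
      set L := lapl (sgnDist S) x₀ with hLdef
      have hKG : K * 1 ≤ K * G := mul_le_mul_of_nonneg_left hG (le_of_lt hKpos)
      have key : a * (-K) * e * L + a * K^2 * e * G = a * K * e * (K * G - L) := by ring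
      rw [key]
      apply mul_pos (mul_pos (mul_pos ha hKpos) hepos)
      nlinarith
    rw [hlaplv, hlaplu] at hlapl_nonneg
    linarith
  -- the boundary gradient estimate
  have hux : u x = 0 := hubz x hx
  obtain ⟨v, hv1, hseg⟩ := sgnDist_segment hScp hSne hx hγ
  set path : ℝ → EuclideanSpace ℝ (Fin N) := fun s => x + s • v with hpathdef
  have hpath0 : path 0 = x := by simp [hpathdef]
  have hpathmaps : MapsTo path (Ioo 0 γ) A := by
    intro s hs
    have := hseg s ⟨le_of_lt hs.1, hs.2⟩
    exact ⟨by rw [this]; linarith [hs.2], by rw [this]; linarith [hs.1]⟩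
  have hpderiv : HasDerivWithinAt path v (Ioo 0 γ) 0 := by
    have : HasDerivAt path v 0 := by
      simpa [hpathdef] using ((hasDerivAt_id (0:ℝ)).smul_const v).const_add x
    exact this.hasDerivWithinAt
  have hp' : HasFDerivWithinAt u (InnerProductSpace.toDual ℝ _ p) A (path 0) := by
    rw [hpath0]
    exact hp.hasFDerivWithinAt
  have hcompose : HasDerivWithinAt (u ∘ path) ((InnerProductSpace.toDual ℝ _ p) v)
      (Ioo 0 γ) 0 :=
    hp'.comp_hasDerivWithinAt 0 hpderiv hpathmaps
  have hinnerval : (InnerProductSpace.toDual ℝ _ p) v = (inner ℝ p v : ℝ) := rfl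
  have hslope := hasDerivWithinAt_iff_tendsto_slope.1 hcompose
  have hsetEq : Ioo (0:ℝ) γ \ {0} = Ioo 0 γ :=
    Set.diff_singleton_eq_self (fun h => absurd h.1 (lt_irrefl 0))
  rw [hsetEq] at hslope
  have hNeBot : (nhdsWithin (0:ℝ) (Ioo 0 γ)).NeBot := by
    rw [← mem_closure_iff_nhdsWithin_neBot, closure_Ioo (ne_of_lt hγ)]
    exact ⟨le_refl 0, le_of_lt hγ⟩
  have hlower : ∀ᶠ s in nhdsWithin (0:ℝ) (Ioo 0 γ), c / γ ≤ slope (u ∘ path) 0 s := by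
    filter_upwards [self_mem_nhdsWithin] with s hs
    have hspos : 0 < s := hs.1
    have hdpath : sgnDist S (path s) = γ - s := hseg s ⟨le_of_lt hs.1, hs.2⟩
    have hwval : w (path s) = a * ekγ * (Real.exp (K * s) - 1) := by
      rw [hwdef]
      simp only [hdpath, hbdef, hekγdef]
      rw [show -(K * (γ - s)) = -(K * γ) + K * s by ring, Real.exp_add]
      ring
    have huw : w (path s) ≤ u (path s) := hcomp (path s) (hpathmaps hs)
    have hexp1 : K * s ≤ Real.exp (K * s) - 1 := by
      have := Real.add_one_le_exp (K * s)
      linarith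
    have hage : m / (K * γ) ≤ a := by
      rw [hadef]
      apply div_le_div_of_nonneg_left (le_of_lt hm) hden
      have := Real.add_one_le_exp (-(K * γ))
      rw [hekγdef]
      linarith
    have hekγge : Real.exp (-(K * γ₀)) ≤ ekγ := by
      rw [hekγdef]
      apply Real.exp_le_exp.2
      have : K * γ ≤ K * γ₀ := mul_le_mul_of_nonneg_left (le_of_lt hγγ₀) (le_of_lt hKpos)
      linarith
    have hchain : c * s / γ ≤ u (path s) := by
      have h1 : a * ekγ * (K * s) ≤ a * ekγ * (Real.exp (K * s) - 1) := by
        apply mul_le_mul_of_nonneg_left hexp1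
        positivity
      have h2 : (m / (K * γ)) * ekγ * (K * s) ≤ a * ekγ * (K * s) := by
        apply mul_le_mul_of_nonneg_right (mul_le_mul_of_nonneg_right hage (le_of_lt hekγpos))
        positivity
      have h3 : (m / (K * γ)) * ekγ * (K * s) = m * ekγ * s / γ := by
        field_simp
      have h4 : c * s / γ ≤ m * ekγ * s / γ := by
        rw [div_le_div_iff_of_pos_right hγ, hcdef]
        nlinarith [mul_le_mul_of_nonneg_left (mul_le_mul_of_nonneg_right hekγge hspos.le) hm.le]
      calc c * s / γ ≤ m * ekγ * s / γ := h4
        _ = (m / (K * γ)) * ekγ * (K * s) := h3.symm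
        _ ≤ a * ekγ * (K * s) := h2
        _ ≤ a * ekγ * (Real.exp (K * s) - 1) := h1
        _ = w (path s) := hwval.symm
        _ ≤ u (path s) := huw
    rw [slope_def_field]
    show c / γ ≤ ((u ∘ path) s - (u ∘ path) 0) / (s - 0)
    rw [Function.comp_apply, Function.comp_apply, hpath0, hux, sub_zero, sub_zero]
    rw [div_le_div_iff₀ hγ hspos]
    rw [div_le_iff₀ hγ] at hchain
    linarith
  have hfinal : c / γ ≤ (inner ℝ p v : ℝ) := by
    rw [← hinnerval]
    exact ge_of_tendsto hslope hlower
  have hpv : (inner ℝ p v : ℝ) ≤ ‖p‖ := by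
    have := real_inner_le_norm p v
    rwa [hv1, mul_one] at this
  have hcγ : 0 < c / γ := div_pos hcpos hγ
  have hnorm : c / γ ≤ ‖p‖ := le_trans hfinal hpv
  calc (m * Real.exp (-(K * γ₀)))^2 / γ^2 = (c / γ)^2 := by rw [hcdef, div_pow]
    _ ≤ ‖p‖^2 := pow_le_pow_left₀ (le_of_lt hcγ) hnorm 2
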